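/- For every τ > 0: ∫_{ℝ} exp(−πx²/τ²) / (Σ_{m∈ℤ} exp(−π(m+x)²/τ²)) dx = 1. That is, x ↦ exp(−πx²/τ²)/θ_τ(x) is a probability density on ℝ. -/

import Mathlib

open Real MeasureTheory

/-- `x ↦ e^{-πx²/τ²}/θ_τ(x)` is a probability density on `ℝ`, where
`θ_τ(x) = Σ_{m ∈ ℤ} e^{-π(m+x)²/τ²}`. -/
theorem stmt_8 (τ : ℝ) (hτ : 0 < τ) :
    ∫ x : ℝ, Real.exp (-π * x ^ 2 / τ ^ 2) /
        ∑' m : ℤ, Real.exp (-π * ((m : ℝ) + x) ^ 2 / τ ^ 2) = 1 := by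
  have ht : (0:ℝ) < 1 / τ ^ 2 := by positivity
  set g : ℤ → ℝ → ℝ := fun m x => Real.exp (-π * ((m : ℝ) + x) ^ 2 / τ ^ 2) with hg
  set θ : ℝ → ℝ := fun x => ∑' m : ℤ, g m x with hθ
  -- summability
  have hsum : ∀ x : ℝ, Summable fun m : ℤ => g m x := by
    intro x
    refine (HurwitzKernelBounds.summable_f_int 0 x ht).congr fun n => ?_
    simp only [HurwitzKernelBounds.f_int, pow_zero, one_mul, hg]
    congr 1
    field_simp
  -- positivity of θ
  have hθpos : ∀ x : ℝ, 0 < θ x := fun x =>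
    Summable.tsum_pos (hsum x) (fun m => (Real.exp_pos _).le) 0 (Real.exp_pos _)
  -- measurability of each term
  have hgm : ∀ m : ℤ, Measurable (g m) := by
    intro m
    apply Continuous.measurable
    fun_prop
  -- measurability of θ
  have hθmeas : Measurable θ := by
    have h1 : θ = fun x => (∑' m : ℤ, ENNReal.ofReal (g m x)).toReal := by
      funext x
      rw [ENNReal.tsum_toReal_eq (fun m => ENNReal.ofReal_ne_top)]
      exact tsum_congr fun m => (ENNReal.toReal_ofReal (Real.exp_pos _).le).symm
    rw [h1]
    exact (Measurable.ennreal_tsum fun m => (hgm m).ennreal_ofReal).ennreal_toReal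
  -- the density
  set f : ℝ → ℝ := fun x => Real.exp (-π * x ^ 2 / τ ^ 2) / θ x with hf
  have hfmeas : Measurable f := by
    apply Measurable.div _ hθmeas
    apply Continuous.measurable
    fun_prop
  have hfnonneg : ∀ x, 0 ≤ f x := fun x =>
    div_nonneg (Real.exp_pos _).le (hθpos x).le
  -- periodicity of θ
  have hθper : ∀ (n : ℤ) (x : ℝ), θ ((n : ℝ) + x) = θ x := by
    intro n x
    show (∑' m : ℤ, g m ((n:ℝ) + x)) = ∑' m : ℤ, g m x
    rw [← (Equiv.addRight n).tsum_eq (fun m : ℤ => g m x)]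
    refine tsum_congr fun m => ?_
    simp only [hg, Equiv.coe_addRight]
    push_cast
    ring_nf
  -- key identity: f (n + x) = g n x / θ x
  have hftrans : ∀ (n : ℤ) (x : ℝ), f ((n : ℝ) + x) = g n x / θ x := by
    intro n x
    simp only [hf, hθper n x, hg]
  -- the lintegral computation
  have key : ∫⁻ x : ℝ, ENNReal.ofReal (f x) = 1 := by
    haveI : VAddInvariantMeasure (AddSubgroup.zmultiples (1:ℝ)) ℝ volume :=
      ⟨fun c s hs => measure_preimage_add _ _ _⟩
    have hFD := isAddFundamentalDomain_Ioc (one_pos) 0 (volume : Measure ℝ)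
    have h1 := hFD.lintegral_eq_tsum'' (fun x => ENNReal.ofReal (f x))
    -- reindex the subgroup by ℤ
    have hbij : Function.Bijective
        (Set.codRestrict (fun n : ℤ => n • (1:ℝ)) (AddSubgroup.zmultiples (1:ℝ))
          (fun n => AddSubgroup.zsmul_mem_zmultiples _ n)) :=
      (Equiv.ofInjective (fun n : ℤ => n • (1:ℝ))
        (zsmul_left_strictMono one_pos).injective).bijective
    set e : ℤ ≃ AddSubgroup.zmultiples (1:ℝ) := Equiv.ofBijective _ hbij with he
    have h2 : ∑' gp : AddSubgroup.zmultiples (1:ℝ),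
        ∫⁻ x in Set.Ioc (0:ℝ) (0+1), ENNReal.ofReal (f (gp +ᵥ x)) =
        ∑' n : ℤ, ∫⁻ x in Set.Ioc (0:ℝ) (0+1), ENNReal.ofReal (g n x / θ x) := by
      rw [← e.tsum_eq]
      refine tsum_congr fun n => ?_
      have hev : ∀ x : ℝ, ((e n : AddSubgroup.zmultiples (1:ℝ)) +ᵥ x) = (n : ℝ) + x := by
        intro x
        show ((e n : AddSubgroup.zmultiples (1:ℝ)) : ℝ) + x = (n : ℝ) + x
        have : ((e n : AddSubgroup.zmultiples (1:ℝ)) : ℝ) = n • (1:ℝ) := rfl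
        rw [this, zsmul_eq_mul, mul_one]
      refine lintegral_congr fun x => ?_
      rw [hev x, hftrans n x]
    have h3 : ∑' n : ℤ, ∫⁻ x in Set.Ioc (0:ℝ) (0+1), ENNReal.ofReal (g n x / θ x) =
        ∫⁻ x in Set.Ioc (0:ℝ) (0+1), ∑' n : ℤ, ENNReal.ofReal (g n x / θ x) :=
      (lintegral_tsum fun n =>
        ((hgm n).div hθmeas).ennreal_ofReal.aemeasurable).symm
    have h4 : ∀ x : ℝ, ∑' n : ℤ, ENNReal.ofReal (g n x / θ x) = 1 := by
      intro x
      rw [← ENNReal.ofReal_tsum_of_nonneg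
        (fun n => div_nonneg (Real.exp_pos _).le (hθpos x).le) ((hsum x).div_const _)]
      rw [tsum_div_const, div_self (hθpos x).ne']
      exact ENNReal.ofReal_one
    rw [h1, h2, h3]
    simp only [h4]
    rw [setLIntegral_one]
    simp
  -- convert to Bochner integral
  have hcalc : ∫ x : ℝ, f x = 1 := by
    rw [integral_eq_lintegral_of_nonneg_ae (Filter.Eventually.of_forall hfnonneg)
      hfmeas.aestronglyMeasurable, key, ENNReal.toReal_one]
  exact hcalc
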